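/- Let C and C' be chain complexes of F2[h]-modules with chain maps f: C → C' and g: C' → C such that g∗∘f∗ = hⁿ·id on homology. If α is an h-torsion homology class of C, then f∗(α) is an h-torsion class of C' and ord(hⁿ·α) ≤ ord(f∗(α)) ≤ ord(α); in particular ord(α) ≤ ord(f∗(α)) + n. -/

import Mathlib

/-! Chain complexes of `F₂[h]`-modules and the order of `h`-torsion
homology classes. -/

open CategoryTheory HomologicalComplex

noncomputable section

abbrev R : Type := Polynomial (ZMod 2)

/-- The formal variable `h`. -/
abbrev h : R := Polynomial.X

/-- An element is `h`-torsion if it is killed by some power of `h`. -/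
def IsHTorsion {M : Type*} [AddCommGroup M] [Module R M] (α : M) : Prop :=
  ∃ k, h ^ k • α = 0

/-- The order of an `h`-torsion element: the least `k` with `hᵏ • α = 0`
(equal to `0` iff `α = 0`, and junk value `0` if `α` is not torsion). -/
def ord {M : Type*} [AddCommGroup M] [Module R M] (α : M) : ℕ :=
  sInf {k | h ^ k • α = 0}

/-- if `g∗ ∘ f∗ = hⁿ·id` on homology and `α` is an `h`-torsion
homology class of `C`, then `f∗(α)` is `h`-torsion and
`ord(hⁿ·α) ≤ ord(f∗(α)) ≤ ord(α)`; in particular `ord(α) ≤ ord(f∗(α)) + n`. -/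
theorem torsion_order_functorial
    (C C' : ChainComplex (ModuleCat R) ℕ)
    (f : C ⟶ C') (g : C' ⟶ C) (n : ℕ)
    (hgf : ∀ (i : ℕ) (x : C.homology i),
      homologyMap g i (homologyMap f i x) = h ^ n • x)
    (i : ℕ) (α : C.homology i) (hα : IsHTorsion α) :
    IsHTorsion (homologyMap f i α) ∧
      ord (h ^ n • α) ≤ ord (homologyMap f i α) ∧
      ord (homologyMap f i α) ≤ ord α ∧
      ord α ≤ ord (homologyMap f i α) + n := by
  have hord : h ^ (ord α) • α = 0 := Nat.sInf_mem hα
  have hord : h ^ (ord α) • α = 0 := Nat.sInf_mem hα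
  have hsmul : ∀ k, homologyMap f i (h ^ k • α) = h ^ k • homologyMap f i α := by
    intro k; exact map_smul (homologyMap f i).hom _ _
  have htors : IsHTorsion (homologyMap f i α) := by
    refine ⟨ord α, ?_⟩
    rw [← hsmul, hord, map_zero]
  have hordf : h ^ (ord (homologyMap f i α)) • homologyMap f i α = 0 :=
    Nat.sInf_mem htors
  have h1 : ord (homologyMap f i α) ≤ ord α := by
    apply Nat.sInf_le
    show h ^ (ord α) • homologyMap f i α = 0
    rw [← hsmul, hord, map_zero]
  have hkill : h ^ (ord (homologyMap f i α)) • (h ^ n • α) = 0 := by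
    have hg := hgf i (h ^ (ord (homologyMap f i α)) • α)
    rw [hsmul, hordf, map_zero] at hg
    rw [smul_comm] at hg
    exact hg.symm
  have h2 : ord (h ^ n • α) ≤ ord (homologyMap f i α) := Nat.sInf_le hkill
  have h3 : ord α ≤ ord (homologyMap f i α) + n := by
    apply Nat.sInf_le
    show h ^ (ord (homologyMap f i α) + n) • α = 0
    rw [pow_add, mul_smul]
    exact hkill
  exact ⟨htors, h2, h1, h3⟩
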